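/- arXiv:2111.10899 — 2 statements merged into one kernel-verified Lean document; each statement's English description precedes it below -/
import Mathlib

section
/- Let Φ be an (m+p)×(m+p) matrix of rank m, partitioned into blocks Φ_11 (m×m), Φ_12, Φ_21, Φ_22, with Φ_11 invertible. If [A B] is a full-rank p×(m+p) matrix (A of size p×m, B of size p×p) with [A B]·Φ = 0, then B is invertible. -/
theorem stmt_4 {K : Type*} [Field K] {m p : ℕ}
    (Φ : Matrix (Fin m ⊕ Fin p) (Fin m ⊕ Fin p) K)
    (hrank : Φ.rank = m)
    (h11 : IsUnit (Φ.toBlocks₁₁))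
    (A : Matrix (Fin p) (Fin m) K) (B : Matrix (Fin p) (Fin p) K)
    (hfull : (Matrix.fromCols A B).rank = p)
    (hann : Matrix.fromCols A B * Φ = 0) :
    IsUnit B := by
  classical
  have hΦ := (Matrix.fromBlocks_toBlocks Φ).symm
  rw [hΦ, Matrix.fromCols_mul_fromBlocks, ← Matrix.fromCols_zero] at hann
  obtain ⟨h1, _⟩ := (Matrix.fromCols_ext_iff _ _ _ _).mp hann
  -- A = -(B * Φ₂₁ * Φ₁₁⁻¹)
  have := h11.invertible
  have hA : A = -(B * Φ.toBlocks₂₁ * ⅟(Φ.toBlocks₁₁)) := by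
    have h2 : A * Φ.toBlocks₁₁ = -(B * Φ.toBlocks₂₁) := eq_neg_of_add_eq_zero_left h1
    calc A = A * Φ.toBlocks₁₁ * ⅟(Φ.toBlocks₁₁) := by
            rw [Matrix.mul_assoc, mul_invOf_self, Matrix.mul_one]
      _ = -(B * Φ.toBlocks₂₁ * ⅟(Φ.toBlocks₁₁)) := by rw [h2, Matrix.neg_mul]
  -- left kernel of [A B] is trivial, via rank
  have hker : ∀ u : Fin p → K, Matrix.vecMul u (Matrix.fromCols A B) = 0 → u = 0 := by
    intro u hu
    have hMrank : (Matrix.fromCols A B).transpose.rank = p := by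
      rw [Matrix.rank_transpose, hfull]
    have hMu : (Matrix.fromCols A B).transpose.mulVec u = 0 := by
      rw [← Matrix.vecMul_transpose, Matrix.transpose_transpose, hu]
    have hrn := (Matrix.fromCols A B).transpose.mulVecLin.finrank_range_add_finrank_ker
    rw [show Module.finrank K (LinearMap.range (Matrix.fromCols A B).transpose.mulVecLin) = p
        from hMrank, Module.finrank_pi, Fintype.card_fin] at hrn
    have hkerbot : LinearMap.ker (Matrix.fromCols A B).transpose.mulVecLin = ⊥ :=
      Submodule.finrank_eq_zero.mp (by omega)
    have hmem : u ∈ LinearMap.ker (Matrix.fromCols A B).transpose.mulVecLin :=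
      LinearMap.mem_ker.mpr (by rw [Matrix.mulVecLin_apply]; exact hMu)
    rw [hkerbot] at hmem
    exact (Submodule.mem_bot K).mp hmem
  rw [← Matrix.vecMul_injective_iff_isUnit]
  intro u v huv
  dsimp only at huv
  have h0 : Matrix.vecMul (u - v) B = 0 := by
    rw [Matrix.sub_vecMul, huv, sub_self]
  have hABu : Matrix.vecMul (u - v) (Matrix.fromCols A B) = 0 := by
    rw [Matrix.vecMul_fromCols, h0, hA]
    have : Matrix.vecMul (u - v) (-(B * Φ.toBlocks₂₁ * ⅟(Φ.toBlocks₁₁))) = 0 := by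
      rw [Matrix.vecMul_neg, Matrix.mul_assoc, ← Matrix.vecMul_vecMul, h0]
      simp
    rw [this]
    ext (i | j) <;> simp
  have := hker _ hABu
  exact sub_eq_zero.mp this
end

section
/- Let W = [W_1; W_2] be a full column rank factorization, where W_1 is an invertible m×m matrix and W_2 is p×m. If two such factorizations W·W* = W'·W'* hold with W' = [W'_1; W'_2] and W'_1 invertible, then W_2·W_1^{-1} = W'_2·(W'_1)^{-1}. (Uniqueness of the deterministic feedback channel H.) -/
open Matrix

theorem stmt_7 {m p : ℕ}
    (W₁ W₁' : Matrix (Fin m) (Fin m) ℂ)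
    (W₂ W₂' : Matrix (Fin p) (Fin m) ℂ)
    (h1 : IsUnit W₁) (h1' : IsUnit W₁')
    (heq : Matrix.fromRows W₁ W₂ * (Matrix.fromRows W₁ W₂)ᴴ =
        Matrix.fromRows W₁' W₂' * (Matrix.fromRows W₁' W₂')ᴴ) :
    W₂ * W₁⁻¹ = W₂' * W₁'⁻¹ := by
  rw [conjTranspose_fromRows_eq_fromCols_conjTranspose,
      conjTranspose_fromRows_eq_fromCols_conjTranspose,
      fromRows_mul_fromCols, fromRows_mul_fromCols] at heq
  have htl : W₁ * W₁ᴴ = W₁' * W₁'ᴴ := congrArg Matrix.toBlocks₁₁ heq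
  have hbl : W₂ * W₁ᴴ = W₂' * W₁'ᴴ := congrArg Matrix.toBlocks₂₁ heq
  have hH : IsUnit W₁ᴴ.det := by
    rw [Matrix.det_conjTranspose]
    exact ((Matrix.isUnit_iff_isUnit_det _).mp h1).star
  have hH' : IsUnit W₁'ᴴ.det := by
    rw [Matrix.det_conjTranspose]
    exact ((Matrix.isUnit_iff_isUnit_det _).mp h1').star
  have key : W₂ * W₁⁻¹ = (W₂ * W₁ᴴ) * (W₁ * W₁ᴴ)⁻¹ := by
    rw [Matrix.mul_inv_rev, Matrix.mul_assoc, ← Matrix.mul_assoc W₁ᴴ,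
      Matrix.mul_nonsing_inv _ hH, Matrix.one_mul]
  have key' : W₂' * W₁'⁻¹ = (W₂' * W₁'ᴴ) * (W₁' * W₁'ᴴ)⁻¹ := by
    rw [Matrix.mul_inv_rev, Matrix.mul_assoc, ← Matrix.mul_assoc W₁'ᴴ,
      Matrix.mul_nonsing_inv _ hH', Matrix.one_mul]
  rw [key, key', hbl, htl]
end
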